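/- Let n ≥ 3, 2 ≤ k ≤ n−1, and let f̃, g̃ be continuous functions on [0,1]. Define R̃_k(f̃)(s) = c_k ∫₀¹ f̃(st)(1−t²)^((k−3)/2) dt and R̃*_k(g̃)(t) = e_{n,k} ∫₀¹ g̃(√(1−s²(1−t²)))(1−s²)^((k−3)/2) s^{n−k−1} ds, with c_k, e_{n,k} > 0 the constants making R̃_k(1)=1 and R̃*_k(1)=1. Then there exists a constant d_{n,k} > 0 such that ∫₀¹ R̃*_k(g̃)(t) f̃(t) (1−t²)^((n−3)/2) dt = d_{n,k} ∫₀¹ g̃(s) R̃_k(f̃)(s) (1−s²)^((n−k−2)/2) s^{k−1} ds. -/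

import Mathlib

open MeasureTheory Set


lemma betaInt (a b : ℝ) (ha : -1 < a) (hb : -1 < b) :
    IntegrableOn (fun x : ℝ => x ^ a * (1 - x) ^ b) (Ioo 0 1) := by
  have h := Complex.betaIntegral_convergent (u := (a:ℂ) + 1) (v := (b:ℂ) + 1)
    (by simp; linarith) (by simp; linarith)
  have h2 : IntegrableOn (fun x : ℝ => (x : ℂ) ^ (a + 1 - 1 : ℂ) * (1 - (x:ℂ)) ^ (b + 1 - 1 : ℂ))
      (Ioo 0 1) volume := h.1.mono_set Ioo_subset_Ioc_self
  have h3 : IntegrableOn (fun x : ℝ => ‖(x : ℂ) ^ (a + 1 - 1 : ℂ) * (1 - (x:ℂ)) ^ (b + 1 - 1 : ℂ)‖)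
      (Ioo 0 1) volume := h2.norm
  refine IntegrableOn.congr_fun h3 ?_ measurableSet_Ioo
  intro x hx
  simp only [norm_mul]
  rw [Complex.norm_cpow_eq_rpow_re_of_pos (by exact_mod_cast hx.1)]
  have hx1 : ((1:ℂ) - (x:ℂ)) = ((1 - x : ℝ) : ℂ) := by push_cast; ring
  rw [hx1, Complex.norm_cpow_eq_rpow_re_of_pos (by simpa using by linarith [hx.2] : (0:ℝ) < 1 - x)]
  norm_num

lemma WInt (a q : ℝ) (ha : -1 < a) (hq : -1 < q) :
    IntegrableOn (fun s : ℝ => (1 - s ^ 2) ^ a * s ^ q) (Ioo 0 1) := by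
  have hbase := (betaInt q a hq ha).const_mul (max 1 (2 ^ a) : ℝ)
  refine Integrable.mono' hbase ?_ ?_
  · refine (Measurable.aestronglyMeasurable ?_)
    exact ((measurable_const.sub (measurable_id.pow_const 2)).pow measurable_const).mul
      (measurable_id.pow measurable_const)
  · filter_upwards [ae_restrict_mem measurableSet_Ioo] with s hs
    obtain ⟨hs0, hs1⟩ := hs
    have h1s : (0:ℝ) < 1 - s := by linarith
    have h1s2 : (0:ℝ) < 1 - s ^ 2 := by nlinarith
    rw [Real.norm_eq_abs, abs_of_nonneg (by positivity)]
    have hsplit : (1 - s ^ 2) ^ a = (1 - s) ^ a * (1 + s) ^ a := by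
      rw [← Real.mul_rpow h1s.le (by linarith : (0:ℝ) ≤ 1 + s)]
      ring_nf
    rw [hsplit]
    have hC : (1 + s) ^ a ≤ max 1 (2 ^ a) := by
      rcases le_or_gt 0 a with h | h
      · exact le_max_of_le_right (Real.rpow_le_rpow (by linarith) (by linarith) h)
      · exact le_max_of_le_left (Real.rpow_le_one_of_one_le_of_nonpos (by linarith) h.le)
    calc (1 - s) ^ a * (1 + s) ^ a * s ^ q
        ≤ (1 - s) ^ a * (max 1 (2 ^ a)) * s ^ q := by
          have := Real.rpow_nonneg h1s.le a
          have := Real.rpow_nonneg hs0.le q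
          have h3 : 0 ≤ (1 - s) ^ a * s ^ q := by positivity
          calc (1 - s) ^ a * (1 + s) ^ a * s ^ q = ((1 - s) ^ a * s ^ q) * ((1 + s) ^ a) := by ring
            _ ≤ ((1 - s) ^ a * s ^ q) * (max 1 (2 ^ a)) := by
                exact mul_le_mul_of_nonneg_left hC h3
            _ = (1 - s) ^ a * (max 1 (2 ^ a)) * s ^ q := by ring
      _ = max 1 (2 ^ a) * (s ^ q * (1 - s) ^ a) := by ring


lemma stepA_core (a b : ℝ) {t : ℝ} (ht : t ∈ Ioo (0:ℝ) 1) (G : ℝ → ℝ) :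
    ((∫ r in Ioo t 1, G r * ((r ^ 2 - t ^ 2) ^ a * ((1 - r ^ 2) ^ b * r)))
      = ∫ s in Ioo (0:ℝ) 1, (1 - t ^ 2) ^ (a + b + 1) *
          (G (Real.sqrt (1 - s ^ 2 * (1 - t ^ 2))) * ((1 - s ^ 2) ^ a * s ^ (2 * b + 1))))
    ∧ (IntegrableOn (fun r => G r * ((r ^ 2 - t ^ 2) ^ a * ((1 - r ^ 2) ^ b * r))) (Ioo t 1)
      ↔ IntegrableOn (fun s => (1 - t ^ 2) ^ (a + b + 1) *
          (G (Real.sqrt (1 - s ^ 2 * (1 - t ^ 2))) * ((1 - s ^ 2) ^ a * s ^ (2 * b + 1))))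
          (Ioo (0:ℝ) 1)) := by
  obtain ⟨ht0, ht1⟩ := ht
  have h1t : (0:ℝ) < 1 - t ^ 2 := by nlinarith
  set φ : ℝ → ℝ := fun s => Real.sqrt (1 - s ^ 2 * (1 - t ^ 2)) with hφdef
  set D : ℝ → ℝ := fun s => 1 / (2 * Real.sqrt (1 - s ^ 2 * (1 - t ^ 2))) *
      (-(2 * s * (1 - t ^ 2))) with hDdef
  have harg : ∀ s ∈ Ioo (0:ℝ) 1, 0 < 1 - s ^ 2 * (1 - t ^ 2) := by
    intro s hs
    nlinarith [hs.1, hs.2, sq_nonneg s, sq_nonneg t]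
  have hφpos : ∀ s ∈ Ioo (0:ℝ) 1, 0 < φ s := fun s hs => Real.sqrt_pos.2 (harg s hs)
  have hφsq : ∀ s ∈ Ioo (0:ℝ) 1, φ s ^ 2 = 1 - s ^ 2 * (1 - t ^ 2) :=
    fun s hs => Real.sq_sqrt (harg s hs).le
  have hderiv : ∀ s ∈ Ioo (0:ℝ) 1, HasDerivWithinAt φ (D s) (Ioo 0 1) s := by
    intro s hs
    have hinner : HasDerivAt (fun x : ℝ => 1 - x ^ 2 * (1 - t ^ 2))
        (-(2 * s * (1 - t ^ 2))) s := by
      have h := ((hasDerivAt_pow 2 s).mul_const (1 - t ^ 2)).const_sub 1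
      simpa using h
    have h2 := (Real.hasDerivAt_sqrt (harg s hs).ne').comp s hinner
    exact (h2.hasDerivWithinAt : _)
  have hinj : InjOn φ (Ioo 0 1) := by
    intro x hx y hy hxy
    have hx2 : φ x ^ 2 = φ y ^ 2 := by rw [hxy]
    rw [hφsq x hx, hφsq y hy] at hx2
    have : x ^ 2 = y ^ 2 := by
      have h' : x ^ 2 * (1 - t ^ 2) = y ^ 2 * (1 - t ^ 2) := by linarith
      exact mul_right_cancel₀ h1t.ne' h'
    have h4 : (x - y) * (x + y) = 0 := by linear_combination this
    rcases mul_eq_zero.1 h4 with h | h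
    · linarith
    · nlinarith [hx.1, hy.1]
  have himg : φ '' Ioo 0 1 = Ioo t 1 := by
    ext r
    constructor
    · rintro ⟨s, hs, rfl⟩
      obtain ⟨hs0, hs1⟩ := hs
      have h1s : (0:ℝ) < 1 - s ^ 2 := by nlinarith
      constructor
      · rw [hφdef]
        apply Real.lt_sqrt_of_sq_lt
        nlinarith [mul_pos h1s h1t]
      · rw [hφdef]
        rw [Real.sqrt_lt' one_pos]
        nlinarith [mul_pos (mul_pos hs0 hs0) h1t]
    · rintro ⟨hrt, hr1⟩
      have hr0 : 0 < r := lt_trans ht0 hrt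
      refine ⟨Real.sqrt ((1 - r ^ 2) / (1 - t ^ 2)), ⟨?_, ?_⟩, ?_⟩
      · apply Real.sqrt_pos.2
        apply div_pos (by nlinarith) h1t
      · rw [Real.sqrt_lt' one_pos, one_pow, div_lt_one h1t]
        nlinarith
      · show Real.sqrt (1 - Real.sqrt ((1 - r ^ 2) / (1 - t ^ 2)) ^ 2 * (1 - t ^ 2)) = r
        have h5 : Real.sqrt ((1 - r ^ 2) / (1 - t ^ 2)) ^ 2 = (1 - r ^ 2) / (1 - t ^ 2) :=
          Real.sq_sqrt (div_nonneg (by nlinarith) h1t.le)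
        rw [h5]
        have h6 : 1 - (1 - r ^ 2) / (1 - t ^ 2) * (1 - t ^ 2) = r ^ 2 := by
          field_simp
          ring
        rw [h6, Real.sqrt_sq hr0.le]
  have hEq : EqOn (fun s => |D s| • (G (φ s) * ((φ s ^ 2 - t ^ 2) ^ a * ((1 - φ s ^ 2) ^ b * φ s))))
      (fun s => (1 - t ^ 2) ^ (a + b + 1) *
        (G (Real.sqrt (1 - s ^ 2 * (1 - t ^ 2))) * ((1 - s ^ 2) ^ a * s ^ (2 * b + 1))))
      (Ioo 0 1) := by
    intro s hs
    obtain ⟨hs0, hs1⟩ := hs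
    have hu : 0 < 1 - s ^ 2 * (1 - t ^ 2) := harg s ⟨hs0, hs1⟩
    have hφs : 0 < φ s := hφpos s ⟨hs0, hs1⟩
    have h1s : (0:ℝ) < 1 - s ^ 2 := by nlinarith
    simp only [smul_eq_mul]
    have hD : |D s| = s * (1 - t ^ 2) / φ s := by
      rw [hDdef]
      simp only []
      rw [abs_mul, abs_neg, abs_of_pos (by positivity : (0:ℝ) < 1 / (2 * Real.sqrt (1 - s ^ 2 * (1 - t ^ 2)))),
        abs_of_pos (by positivity : (0:ℝ) < 2 * s * (1 - t ^ 2))]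
      rw [hφdef]
      field_simp
    rw [hD, hφsq s ⟨hs0, hs1⟩]
    have e1 : 1 - s ^ 2 * (1 - t ^ 2) - t ^ 2 = (1 - t ^ 2) * (1 - s ^ 2) := by ring
    have e2 : 1 - (1 - s ^ 2 * (1 - t ^ 2)) = (1 - t ^ 2) * s ^ 2 := by ring
    rw [e1, e2, Real.mul_rpow h1t.le h1s.le, Real.mul_rpow h1t.le (by positivity : (0:ℝ) ≤ s ^ 2)]
    have e3 : (s ^ 2) ^ b = s ^ (2 * b) := by
      rw [← Real.rpow_natCast s 2, ← Real.rpow_mul hs0.le]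
      norm_num
    have e4 : s ^ (2 * b + 1) = s ^ (2 * b) * s := by
      rw [Real.rpow_add hs0, Real.rpow_one]
    have e5 : (1 - t ^ 2) ^ (a + b + 1) = (1 - t ^ 2) ^ a * (1 - t ^ 2) ^ b * (1 - t ^ 2) := by
      rw [Real.rpow_add h1t, Real.rpow_add h1t, Real.rpow_one]
    rw [e3, e4, e5]
    have hφne : φ s ≠ 0 := hφs.ne'
    field_simp
    ring
  constructor
  · rw [← himg, integral_image_eq_integral_abs_deriv_smul measurableSet_Ioo hderiv hinj]
    exact setIntegral_congr_fun measurableSet_Ioo hEq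
  · rw [← himg, integrableOn_image_iff_integrableOn_abs_deriv_smul measurableSet_Ioo hderiv hinj]
    exact ⟨fun h => h.congr_fun hEq measurableSet_Ioo,
      fun h => h.congr_fun hEq.symm measurableSet_Ioo⟩


lemma stepB (a : ℝ) {r : ℝ} (hr : r ∈ Ioo (0:ℝ) 1) (F : ℝ → ℝ) :
    ∫ u in Ioo 0 r, F u * (r ^ 2 - u ^ 2) ^ a
      = r ^ (2 * a + 1) * ∫ t in Ioo (0:ℝ) 1, F (r * t) * (1 - t ^ 2) ^ a := by
  obtain ⟨hr0, hr1⟩ := hr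
  have himg : (fun t : ℝ => r * t) '' Ioo 0 1 = Ioo 0 r := by
    rw [image_mul_left_Ioo hr0]
    simp
  have hderiv : ∀ t ∈ Ioo (0:ℝ) 1, HasDerivWithinAt (fun t : ℝ => r * t) (r * 1) (Ioo 0 1) t :=
    fun t _ => ((hasDerivAt_id t).const_mul r).hasDerivWithinAt
  have hinj : InjOn (fun t : ℝ => r * t) (Ioo 0 1) :=
    (mul_right_injective₀ hr0.ne').injOn
  rw [← himg, integral_image_eq_integral_abs_deriv_smul measurableSet_Ioo hderiv hinj,
    ← integral_const_mul]
  refine setIntegral_congr_fun measurableSet_Ioo ?_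
  intro t ht
  obtain ⟨ht0, ht1⟩ := ht
  simp only [smul_eq_mul, mul_one, abs_of_pos hr0]
  have e1 : r ^ 2 - (r * t) ^ 2 = r ^ 2 * (1 - t ^ 2) := by ring
  rw [e1, Real.mul_rpow (by positivity) (by nlinarith : (0:ℝ) ≤ 1 - t ^ 2)]
  have e2 : (r ^ 2) ^ a = r ^ (2 * a) := by
    rw [← Real.rpow_natCast r 2, ← Real.rpow_mul hr0.le]
    norm_num
  have e3 : r ^ (2 * a + 1) = r ^ (2 * a) * r := by
    rw [Real.rpow_add hr0, Real.rpow_one]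
  rw [e2, e3]
  ring

lemma key (a b : ℝ) (ha : -1 < a) (hb : -1 < b) (hab : 0 ≤ a + b + 1)
    (F G : ℝ → ℝ) (hF : Continuous F) (hG : Continuous G) :
    (∫ t in Ioo (0:ℝ) 1,
        (∫ s in Ioo (0:ℝ) 1,
            G (Real.sqrt (1 - s ^ 2 * (1 - t ^ 2))) * (1 - s ^ 2) ^ a * s ^ (2 * b + 1))
          * F t * (1 - t ^ 2) ^ (a + b + 1))
    = ∫ s in Ioo (0:ℝ) 1,
        G s * (∫ t in Ioo (0:ℝ) 1, F (s * t) * (1 - t ^ 2) ^ a) * (1 - s ^ 2) ^ b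
          * s ^ (2 * a + 2) := by
  -- bounds for F and G on [0,1]
  obtain ⟨MF, hMF⟩ := (isCompact_Icc (a := (0:ℝ)) (b := 1)).exists_bound_of_continuousOn
    hF.continuousOn
  obtain ⟨MG, hMG⟩ := (isCompact_Icc (a := (0:ℝ)) (b := 1)).exists_bound_of_continuousOn
    hG.continuousOn
  have hMF0 : 0 ≤ MF := le_trans (norm_nonneg _) (hMF 0 (by norm_num))
  have hMG0 : 0 ≤ MG := le_trans (norm_nonneg _) (hMG 0 (by norm_num))
  set K : ℝ → ℝ → ℝ :=
    fun t r => (F t * G r) * ((r ^ 2 - t ^ 2) ^ a * ((1 - r ^ 2) ^ b * r)) with hK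
  set H : ℝ × ℝ → ℝ := fun p => if p.1 < p.2 then K p.1 p.2 else 0 with hH
  have hq : (-1:ℝ) < 2 * b + 1 := by linarith
  -- basic set identities
  have hset1 : ∀ t ∈ Ioo (0:ℝ) 1, Ioi t ∩ Ioo (0:ℝ) 1 = Ioo t 1 := by
    intro t ht
    ext x
    simp only [mem_inter_iff, mem_Ioi, mem_Ioo]
    exact ⟨fun ⟨h1, _, h3⟩ => ⟨h1, h3⟩, fun ⟨h1, h2⟩ => ⟨h1, ht.1.trans h1, h2⟩⟩
  have hset2 : ∀ r ∈ Ioo (0:ℝ) 1, Iio r ∩ Ioo (0:ℝ) 1 = Ioo 0 r := by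
    intro r hr
    ext x
    simp only [mem_inter_iff, mem_Iio, mem_Ioo]
    exact ⟨fun ⟨h1, h2, _⟩ => ⟨h2, h1⟩, fun ⟨h1, h2⟩ => ⟨h2, h1, h2.trans hr.2⟩⟩
  -- indicator forms
  have hind1 : ∀ t : ℝ, (fun r => H (t, r)) = (Ioi t).indicator (fun r => K t r) := by
    intro t
    funext r
    simp only [hH, Set.indicator_apply, mem_Ioi]
  have hind2 : ∀ r : ℝ, (fun t => H (t, r)) = (Iio r).indicator (fun t => K t r) := by
    intro r
    funext t
    simp only [hH, Set.indicator_apply, mem_Iio]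
  -- the sqrt map stays in [0,1]
  have hsqrt_mem : ∀ t s : ℝ, t ∈ Ioo (0:ℝ) 1 →
      Real.sqrt (1 - s ^ 2 * (1 - t ^ 2)) ∈ Icc (0:ℝ) 1 := by
    intro t s ht
    refine ⟨Real.sqrt_nonneg _, Real.sqrt_le_one.mpr ?_⟩
    nlinarith [mul_nonneg (sq_nonneg s) (show (0:ℝ) ≤ 1 - t ^ 2 by nlinarith [ht.1, ht.2])]
  -- integrability of transformed integrand, for any bounded-continuous prefactor
  have htrans : ∀ t ∈ Ioo (0:ℝ) 1, ∀ (c : ℝ) (h : ℝ → ℝ), Continuous h →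
      (∀ x ∈ Icc (0:ℝ) 1, ‖h x‖ ≤ c) →
      IntegrableOn (fun s => (1 - t ^ 2) ^ (a + b + 1) *
        (h (Real.sqrt (1 - s ^ 2 * (1 - t ^ 2))) * ((1 - s ^ 2) ^ a * s ^ (2 * b + 1))))
        (Ioo (0:ℝ) 1) := by
    intro t ht c h hcont hbd
    have hbase := WInt a (2 * b + 1) ha hq
    have h1 : Integrable (fun s : ℝ => ((1 - t ^ 2) ^ (a + b + 1) *
        h (Real.sqrt (1 - s ^ 2 * (1 - t ^ 2)))) * ((1 - s ^ 2) ^ a * s ^ (2 * b + 1)))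
        (volume.restrict (Ioo (0:ℝ) 1)) := by
      have hφc : Continuous (fun s : ℝ => Real.sqrt (1 - s ^ 2 * (1 - t ^ 2))) :=
        Real.continuous_sqrt.comp
          (continuous_const.sub ((continuous_pow 2).mul continuous_const))
      refine Integrable.bdd_mul hbase
        ((continuous_const.mul (hcont.comp hφc)).aestronglyMeasurable)
        (c := |(1 - t ^ 2) ^ (a + b + 1)| * c) (ae_of_all _ ?_)
      intro s
      rw [norm_mul]
      refine mul_le_mul_of_nonneg_left ?_ (abs_nonneg _)
      exact hbd _ (hsqrt_mem t s ht)
    refine IntegrableOn.congr_fun h1 ?_ measurableSet_Ioo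
    intro s _
    ring
  -- integrability of K on the triangle slice
  have hKint : ∀ t ∈ Ioo (0:ℝ) 1, IntegrableOn (fun r => K t r) (Ioo t 1) := by
    intro t ht
    have h2 := (stepA_core a b ht (fun r => F t * G r)).2
    refine h2.mpr ?_
    refine htrans t ht (MF * MG) (fun x => F t * G x) (continuous_const.mul hG) ?_
    intro x hx
    rw [norm_mul]
    exact mul_le_mul (hMF t (Ioo_subset_Icc_self ht)) (hMG x hx) (norm_nonneg _) hMF0
  -- measurability of H
  have hHmeas : Measurable H := by
    refine Measurable.ite (measurableSet_lt measurable_fst measurable_snd) ?_ measurable_const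
    refine Measurable.mul (((hF.comp continuous_fst).mul
      (hG.comp continuous_snd)).measurable) ?_
    refine Measurable.mul (((measurable_snd.pow measurable_const).sub
      (measurable_fst.pow measurable_const)).pow measurable_const) ?_
    exact ((measurable_const.sub (measurable_snd.pow measurable_const)).pow
      measurable_const).mul measurable_snd
  have hH_aesm : AEStronglyMeasurable H
      ((volume.restrict (Ioo (0:ℝ) 1)).prod (volume.restrict (Ioo (0:ℝ) 1))) :=
    hHmeas.aestronglyMeasurable
  -- the constant CW
  set CW := ∫ s in Ioo (0:ℝ) 1, (1 - s ^ 2) ^ a * s ^ (2 * b + 1) with hCW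
  have hCW0 : 0 ≤ CW := by
    refine setIntegral_nonneg measurableSet_Ioo ?_
    intro s hs
    have h1 : (0:ℝ) < 1 - s ^ 2 := by nlinarith [hs.1, hs.2]
    exact mul_nonneg (Real.rpow_nonneg h1.le a) (Real.rpow_nonneg hs.1.le _)
  -- Fubini integrability
  have hHint : Integrable H
      ((volume.restrict (Ioo (0:ℝ) 1)).prod (volume.restrict (Ioo (0:ℝ) 1))) := by
    rw [MeasureTheory.integrable_prod_iff hH_aesm]
    constructor
    · filter_upwards [ae_restrict_mem measurableSet_Ioo] with t ht
      rw [hind1 t, integrable_indicator_iff measurableSet_Ioi]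
      have : IntegrableOn (fun r => K t r) (Ioi t) (volume.restrict (Ioo (0:ℝ) 1)) := by
        rw [IntegrableOn, Measure.restrict_restrict measurableSet_Ioi, hset1 t ht]
        exact hKint t ht
      exact this
    · have haesm2 : AEStronglyMeasurable
          (fun t => ∫ r, ‖H (t, r)‖ ∂(volume.restrict (Ioo (0:ℝ) 1)))
          (volume.restrict (Ioo (0:ℝ) 1)) :=
        hH_aesm.norm.integral_prod_right'
      refine Integrable.mono' (integrable_const (MF * MG * CW)) haesm2 ?_
      filter_upwards [ae_restrict_mem measurableSet_Ioo] with t ht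
      have hnn : 0 ≤ ∫ r, ‖H (t, r)‖ ∂(volume.restrict (Ioo (0:ℝ) 1)) :=
        integral_nonneg fun r => norm_nonneg _
      rw [Real.norm_eq_abs, abs_of_nonneg hnn]
      have e1 : (fun r => ‖H (t, r)‖) = (Ioi t).indicator (fun r => ‖K t r‖) := by
        funext r
        rw [show H (t, r) = (Ioi t).indicator (fun r => K t r) r from congrFun (hind1 t) r]
        exact norm_indicator_eq_indicator_norm (fun r => K t r) r
      rw [e1, integral_indicator measurableSet_Ioi,
        Measure.restrict_restrict measurableSet_Ioi, hset1 t ht]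
      -- bound the integral over Ioo t 1
      have hbint : IntegrableOn
          (fun r => (MF * MG) * ((r ^ 2 - t ^ 2) ^ a * ((1 - r ^ 2) ^ b * r))) (Ioo t 1) := by
        refine (stepA_core a b ht (fun _ => MF * MG)).2.mpr ?_
        refine htrans t ht (MF * MG) (fun _ => MF * MG) continuous_const ?_
        intro x _
        rw [Real.norm_eq_abs, abs_of_nonneg (mul_nonneg hMF0 hMG0)]
      have hmono : ∫ r in Ioo t 1, ‖K t r‖
          ≤ ∫ r in Ioo t 1, (MF * MG) * ((r ^ 2 - t ^ 2) ^ a * ((1 - r ^ 2) ^ b * r)) := by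
        refine setIntegral_mono_on ((hKint t ht).norm) hbint measurableSet_Ioo ?_
        intro r hr
        have hw : 0 ≤ (r ^ 2 - t ^ 2) ^ a * ((1 - r ^ 2) ^ b * r) := by
          have h1 : (0:ℝ) ≤ r ^ 2 - t ^ 2 := by nlinarith [hr.1, hr.2, ht.1]
          have h2 : (0:ℝ) ≤ 1 - r ^ 2 := by nlinarith [hr.1, hr.2, ht.1]
          have h3 : (0:ℝ) ≤ r := by nlinarith [hr.1, ht.1]
          exact mul_nonneg (Real.rpow_nonneg h1 a)
            (mul_nonneg (Real.rpow_nonneg h2 b) h3)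
        have hrI : r ∈ Icc (0:ℝ) 1 := ⟨by nlinarith [hr.1, ht.1], hr.2.le⟩
        have htI : t ∈ Icc (0:ℝ) 1 := Ioo_subset_Icc_self ht
        calc ‖K t r‖ = ‖F t * G r‖ * ‖(r ^ 2 - t ^ 2) ^ a * ((1 - r ^ 2) ^ b * r)‖ := by
              rw [hK]; exact norm_mul _ _
          _ = ‖F t * G r‖ * ((r ^ 2 - t ^ 2) ^ a * ((1 - r ^ 2) ^ b * r)) := by
              rw [Real.norm_eq_abs ((r ^ 2 - t ^ 2) ^ a * ((1 - r ^ 2) ^ b * r)),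
                abs_of_nonneg hw]
          _ ≤ (MF * MG) * ((r ^ 2 - t ^ 2) ^ a * ((1 - r ^ 2) ^ b * r)) := by
              refine mul_le_mul_of_nonneg_right ?_ hw
              rw [norm_mul]
              exact mul_le_mul (hMF t htI) (hMG r hrI) (norm_nonneg _) hMF0
      refine le_trans hmono ?_
      rw [(stepA_core a b ht (fun _ => MF * MG)).1]
      rw [show (fun s => (1 - t ^ 2) ^ (a + b + 1) *
            ((MF * MG) * ((1 - s ^ 2) ^ a * s ^ (2 * b + 1))))
          = (fun s => ((1 - t ^ 2) ^ (a + b + 1) * (MF * MG)) *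
            ((1 - s ^ 2) ^ a * s ^ (2 * b + 1))) from funext fun s => by ring]
      rw [integral_const_mul]
      have hle1 : (1 - t ^ 2) ^ (a + b + 1) ≤ 1 := by
        refine Real.rpow_le_one ?_ ?_ hab
        · nlinarith [ht.1, ht.2]
        · nlinarith [ht.1, ht.2]
      have hge0 : 0 ≤ (1 - t ^ 2) ^ (a + b + 1) :=
        Real.rpow_nonneg (by nlinarith [ht.1, ht.2]) _
      have hCW' : ∫ s in Ioo (0:ℝ) 1, (1 - s ^ 2) ^ a * s ^ (2 * b + 1) = CW := rfl
      rw [mul_assoc, hCW']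
      nlinarith [mul_nonneg (mul_nonneg hMF0 hMG0) hCW0]
  -- main chain
  calc (∫ t in Ioo (0:ℝ) 1,
        (∫ s in Ioo (0:ℝ) 1,
            G (Real.sqrt (1 - s ^ 2 * (1 - t ^ 2))) * (1 - s ^ 2) ^ a * s ^ (2 * b + 1))
          * F t * (1 - t ^ 2) ^ (a + b + 1))
      = ∫ t in Ioo (0:ℝ) 1, ∫ r in Ioo (0:ℝ) 1, H (t, r) := by
        refine setIntegral_congr_fun measurableSet_Ioo ?_
        intro t ht
        beta_reduce
        rw [hind1 t, integral_indicator measurableSet_Ioi,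
          Measure.restrict_restrict measurableSet_Ioi, hset1 t ht]
        rw [(stepA_core a b ht (fun r => F t * G r)).1]
        rw [show (fun s => (1 - t ^ 2) ^ (a + b + 1) *
              ((F t * G (Real.sqrt (1 - s ^ 2 * (1 - t ^ 2)))) *
                ((1 - s ^ 2) ^ a * s ^ (2 * b + 1))))
            = (fun s => ((1 - t ^ 2) ^ (a + b + 1) * F t) *
              (G (Real.sqrt (1 - s ^ 2 * (1 - t ^ 2))) * (1 - s ^ 2) ^ a * s ^ (2 * b + 1)))
            from funext fun s => by ring]
        rw [integral_const_mul]
        ring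
    _ = ∫ r in Ioo (0:ℝ) 1, ∫ t in Ioo (0:ℝ) 1, H (t, r) := integral_integral_swap hHint
    _ = ∫ s in Ioo (0:ℝ) 1,
          G s * (∫ t in Ioo (0:ℝ) 1, F (s * t) * (1 - t ^ 2) ^ a) * (1 - s ^ 2) ^ b
            * s ^ (2 * a + 2) := by
        refine setIntegral_congr_fun measurableSet_Ioo ?_
        intro r hr
        beta_reduce
        rw [hind2 r, integral_indicator measurableSet_Iio,
          Measure.restrict_restrict measurableSet_Iio, hset2 r hr]
        rw [show (fun t => K t r)
            = (fun t => (G r * ((1 - r ^ 2) ^ b * r)) * (F t * (r ^ 2 - t ^ 2) ^ a))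
            from funext fun t => by rw [hK]; ring]
        rw [integral_const_mul, stepB a hr F]
        have e2 : r ^ (2 * a + 2) = r ^ (2 * a + 1) * r := by
          rw [show (2 * a + 2 : ℝ) = (2 * a + 1) + 1 by ring, Real.rpow_add hr.1,
            Real.rpow_one]
        rw [e2]
        ring

/-- the duality relation between the Radon transform `R̃ₖ` and its dual
`R̃*ₖ` on functions of revolution in the cosine variable:
`∫₀¹ R̃*ₖ(g̃)(t) f̃(t) (1-t²)^((n-3)/2) dt
  = d_{n,k} ∫₀¹ g̃(s) R̃ₖ(f̃)(s) (1-s²)^((n-k-2)/2) s^(k-1) ds`. -/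
theorem stmt1 (n k : ℕ) (hn : 3 ≤ n) (hk2 : 2 ≤ k) (hk : k ≤ n - 1)
    (f g : ℝ → ℝ) (hf : ContinuousOn f (Icc 0 1)) (hg : ContinuousOn g (Icc 0 1))
    (c e : ℝ) (hcpos : 0 < c) (hepos : 0 < e)
    (hc : c * ∫ t in (0:ℝ)..1, (1 - t ^ 2) ^ (((k : ℝ) - 3) / 2) = 1)
    (he : e * ∫ s in (0:ℝ)..1,
        (1 - s ^ 2) ^ (((k : ℝ) - 3) / 2) * s ^ ((n : ℝ) - (k : ℝ) - 1) = 1) :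
    ∃ d : ℝ, 0 < d ∧
      (∫ t in (0:ℝ)..1,
          (e * ∫ s in (0:ℝ)..1,
              g (Real.sqrt (1 - s ^ 2 * (1 - t ^ 2))) *
                (1 - s ^ 2) ^ (((k : ℝ) - 3) / 2) * s ^ ((n : ℝ) - (k : ℝ) - 1)) *
            f t * (1 - t ^ 2) ^ (((n : ℝ) - 3) / 2))
        = d * ∫ s in (0:ℝ)..1,
            g s * (c * ∫ t in (0:ℝ)..1, f (s * t) * (1 - t ^ 2) ^ (((k : ℝ) - 3) / 2)) *
              (1 - s ^ 2) ^ (((n : ℝ) - (k : ℝ) - 2) / 2) * s ^ ((k : ℝ) - 1) := by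
  -- abbreviations for the exponents
  set a : ℝ := ((k : ℝ) - 3) / 2 with hadef
  set b : ℝ := ((n : ℝ) - (k : ℝ) - 2) / 2 with hbdef
  have hk2' : (2:ℝ) ≤ (k:ℝ) := by exact_mod_cast hk2
  have hn3' : (3:ℝ) ≤ (n:ℝ) := by exact_mod_cast hn
  have hkn : (k:ℝ) + 1 ≤ (n:ℝ) := by
    have : k + 1 ≤ n := by omega
    exact_mod_cast this
  have ha : (-1:ℝ) < a := by rw [hadef]; linarith
  have hb : (-1:ℝ) < b := by rw [hbdef]; linarith
  have hab : (0:ℝ) ≤ a + b + 1 := by rw [hadef, hbdef]; linarith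
  -- extend f and g continuously to all of ℝ
  obtain ⟨F, hFr⟩ := ContinuousMap.exists_restrict_eq (isClosed_Icc (a := (0:ℝ)) (b := 1))
    ⟨_, continuousOn_iff_continuous_restrict.mp hf⟩
  obtain ⟨G, hGr⟩ := ContinuousMap.exists_restrict_eq (isClosed_Icc (a := (0:ℝ)) (b := 1))
    ⟨_, continuousOn_iff_continuous_restrict.mp hg⟩
  have hFf : ∀ x ∈ Icc (0:ℝ) 1, F x = f x := fun x hx =>
    congrFun (congrArg DFunLike.coe hFr) ⟨x, hx⟩
  have hGg : ∀ x ∈ Icc (0:ℝ) 1, G x = g x := fun x hx =>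
    congrFun (congrArg DFunLike.coe hGr) ⟨x, hx⟩
  -- exponent renamings
  have hexp1 : (n : ℝ) - (k : ℝ) - 1 = 2 * b + 1 := by rw [hbdef]; ring
  have hexp2 : ((n : ℝ) - 3) / 2 = a + b + 1 := by rw [hadef, hbdef]; ring
  have hexp3 : (k : ℝ) - 1 = 2 * a + 2 := by rw [hadef]; ring
  refine ⟨e / c, div_pos hepos hcpos, ?_⟩
  -- convert interval integrals to integrals over `Ioo 0 1`
  simp only [intervalIntegral.integral_of_le (by norm_num : (0:ℝ) ≤ 1),
    MeasureTheory.integral_Ioc_eq_integral_Ioo, hexp1, hexp2, hexp3]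
  -- identify the two sides
  have hEqL : (∫ t in Ioo (0:ℝ) 1,
        (e * ∫ s in Ioo (0:ℝ) 1,
            g (Real.sqrt (1 - s ^ 2 * (1 - t ^ 2))) * (1 - s ^ 2) ^ a * s ^ (2 * b + 1)) *
          f t * (1 - t ^ 2) ^ (a + b + 1))
      = e * ∫ t in Ioo (0:ℝ) 1,
          (∫ s in Ioo (0:ℝ) 1,
              G (Real.sqrt (1 - s ^ 2 * (1 - t ^ 2))) * (1 - s ^ 2) ^ a * s ^ (2 * b + 1)) *
            F t * (1 - t ^ 2) ^ (a + b + 1) := by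
    rw [← integral_const_mul]
    refine setIntegral_congr_fun measurableSet_Ioo ?_
    intro t ht
    beta_reduce
    have hinner : (∫ s in Ioo (0:ℝ) 1,
          g (Real.sqrt (1 - s ^ 2 * (1 - t ^ 2))) * (1 - s ^ 2) ^ a * s ^ (2 * b + 1))
        = ∫ s in Ioo (0:ℝ) 1,
          G (Real.sqrt (1 - s ^ 2 * (1 - t ^ 2))) * (1 - s ^ 2) ^ a * s ^ (2 * b + 1) := by
      refine setIntegral_congr_fun measurableSet_Ioo ?_
      intro s hs
      beta_reduce
      have hmem : Real.sqrt (1 - s ^ 2 * (1 - t ^ 2)) ∈ Icc (0:ℝ) 1 := by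
        refine ⟨Real.sqrt_nonneg _, Real.sqrt_le_one.mpr ?_⟩
        nlinarith [mul_nonneg (sq_nonneg s) (show (0:ℝ) ≤ 1 - t ^ 2 by nlinarith [ht.1, ht.2])]
      rw [hGg _ hmem]
    rw [hinner, hFf t (Ioo_subset_Icc_self ht)]
    ring
  have hEqR : (∫ s in Ioo (0:ℝ) 1,
        g s * (c * ∫ t in Ioo (0:ℝ) 1, f (s * t) * (1 - t ^ 2) ^ a) *
          (1 - s ^ 2) ^ b * s ^ (2 * a + 2))
      = c * ∫ s in Ioo (0:ℝ) 1,
          G s * (∫ t in Ioo (0:ℝ) 1, F (s * t) * (1 - t ^ 2) ^ a) * (1 - s ^ 2) ^ b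
            * s ^ (2 * a + 2) := by
    rw [← integral_const_mul]
    refine setIntegral_congr_fun measurableSet_Ioo ?_
    intro s hs
    beta_reduce
    have hinner : (∫ t in Ioo (0:ℝ) 1, f (s * t) * (1 - t ^ 2) ^ a)
        = ∫ t in Ioo (0:ℝ) 1, F (s * t) * (1 - t ^ 2) ^ a := by
      refine setIntegral_congr_fun measurableSet_Ioo ?_
      intro u hu
      beta_reduce
      have hmem : s * u ∈ Icc (0:ℝ) 1 := by
        constructor
        · exact mul_nonneg hs.1.le hu.1.le
        · nlinarith [hs.1, hs.2, hu.1, hu.2]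
      rw [hFf _ hmem]
    rw [hinner, hGg s (Ioo_subset_Icc_self hs)]
    ring
  rw [hEqL, hEqR]
  rw [key a b ha hb hab F G (map_continuous F) (map_continuous G)]
  field_simp
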